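/- Let H₈ be the [8,4,4] binary Hamming code, the 𝔽₂-row space of the 4×8 matrix with rows (0,0,0,0,1,1,1,1), (0,0,1,1,0,0,1,1), (0,1,0,1,0,1,0,1), (1,1,1,1,1,1,1,1). Then for every m ≥ 1, the complete weight enumerator h_m := cwe(H₈(m)) satisfies h_m = Σ_{v ∈ 𝔽₂^m} x_v^8 + 14 Σ_{U ∈ G(m,1)} Σ_{d ∈ 𝔽₂^m/U} Π_{v ∈ d+U} x_v^4 + 168 Σ_{U ∈ G(m,2)} Σ_{d ∈ 𝔽₂^m/U} Π_{v ∈ d+U} x_v^2 + 1344 Σ_{U ∈ G(m,3)} Σ_{d ∈ 𝔽₂^m/U} Π_{v ∈ d+U} x_v, where G(m,k) denotes the set of k-dimensional 𝔽₂-subspaces of 𝔽₂^m, the inner sums run over the cosets d + U of U in 𝔽₂^m, and the products run over the elements v of the coset d + U. -/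

import Mathlib

open Matrix MvPolynomial

noncomputable section

abbrev V (m : ℕ) : Type := Fin m → ZMod 2

/-- σ₁ = [[0,1],[1,0]] -/
def sigma1 : Matrix (ZMod 2) (ZMod 2) ℝ := fun v w => if v = w then 0 else 1

/-- σ₂ = [[1,0],[0,-1]] -/
def sigma2 : Matrix (ZMod 2) (ZMod 2) ℝ := fun v w =>
  if v = w then (if v = 0 then 1 else -1) else 0

/-- The Kronecker product of `m` 2×2 matrices having `s` in factor `j` and the identity in
all other factors, with coordinates of `ℝ^{2^m}` indexed by `𝔽₂^m`. -/
def kronFactor (m : ℕ) (j : Fin m) (s : Matrix (ZMod 2) (ZMod 2) ℝ) :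
    Matrix (V m) (V m) ℝ :=
  fun v w => ∏ i : Fin m, if i = j then s (v i) (w i) else (if v i = w i then 1 else 0)

/-- The extraspecial 2-group `E(m)` as a subgroup of the orthogonal group `O(2^m, ℝ)`. -/
def Egroup (m : ℕ) : Subgroup (Matrix.orthogonalGroup (V m) ℝ) :=
  Subgroup.closure {g | ∃ j : Fin m,
    (g : Matrix (V m) (V m) ℝ) = kronFactor m j sigma1 ∨
    (g : Matrix (V m) (V m) ℝ) = kronFactor m j sigma2}

/-- The real Clifford group `𝒞_m`, the normalizer of `E(m)` in `O(2^m, ℝ)`. -/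
def Clifford (m : ℕ) : Subgroup (Matrix.orthogonalGroup (V m) ℝ) :=
  Subgroup.normalizer ((Egroup m : Subgroup (Matrix.orthogonalGroup (V m) ℝ)) : Set (Matrix.orthogonalGroup (V m) ℝ))

/-- Action of a matrix on polynomials by linear substitution of the variables:
`x_f ↦ ∑ f', g f' f • x_{f'}`. -/
def polyAct {σ R : Type*} [Fintype σ] [CommSemiring R] (g : Matrix σ σ R)
    (p : MvPolynomial σ R) : MvPolynomial σ R :=
  aeval (fun f => ∑ f' : σ, C (g f' f) * X f') p

/-- The dual of a linear code over `𝔽_p`. -/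
def dualCode {p N : ℕ} (C : Submodule (ZMod p) (Fin N → ZMod p)) :
    Submodule (ZMod p) (Fin N → ZMod p) where
  carrier := {v | ∀ c ∈ C, ∑ j, v j * c j = 0}
  add_mem' := by
    intro a b ha hb c hc
    simp only [Set.mem_setOf_eq] at *
    simp [add_mul, Finset.sum_add_distrib, ha c hc, hb c hc]
  zero_mem' := by
    intro c hc
    simp
  smul_mem' := by
    intro r a ha c hc
    simp only [Set.mem_setOf_eq] at *
    simp [smul_eq_mul, mul_assoc, ← Finset.mul_sum, ha c hc]

/-- `C(m) = C ⊗ 𝔽_{2^m}` : the `𝔽_{p^m}`-linear span of `C` inside `𝔽_{p^m}^N`, under the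
identification of `𝔽_{p^m}` with `𝔽_p^m` given by a fixed basis; a word belongs to it iff
it is of the form `j ↦ (rows i j)_i` with all rows in `C`. -/
def codeExt (p m N : ℕ) (C : Submodule (ZMod p) (Fin N → ZMod p)) :
    Set (Fin N → (Fin m → ZMod p)) :=
  {w | ∃ rows : Fin m → (Fin N → ZMod p), (∀ i, rows i ∈ C) ∧ ∀ j i, w j i = rows i j}

open scoped Classical in
/-- The complete weight enumerator of `C(m)`. -/
def cwe (m N : ℕ) (C : Submodule (ZMod 2) (Fin N → ZMod 2)) : MvPolynomial (V m) ℝ :=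
  ∑ w : Fin N → V m, if w ∈ codeExt 2 m N C then ∏ j, X (w j) else 0

/-- The `[8,4,4]` binary Hamming code `H₈`. -/
def H8code : Submodule (ZMod 2) (Fin 8 → ZMod 2) :=
  Submodule.span (ZMod 2)
    {![0,0,0,0,1,1,1,1], ![0,0,1,1,0,0,1,1], ![0,1,0,1,0,1,0,1], ![1,1,1,1,1,1,1,1]}

open scoped Classical in
/-- The sum `∑_{U ∈ G(m,k)} ∑_{d ∈ 𝔽₂^m/U} ∏_{v ∈ d+U} x_v^e` over the `k`-dimensional
subspaces `U` of `𝔽₂^m` and the cosets `d + U`. -/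
def cosetTerm (m k e : ℕ) : MvPolynomial (V m) ℝ :=
  ∑ᶠ (U : Submodule (ZMod 2) (V m)) (_ : Module.finrank (ZMod 2) U = k),
    ∑ᶠ d : V m ⧸ U,
      ∏ v ∈ Finset.univ.filter (fun v : V m => (Submodule.Quotient.mk v : V m ⧸ U) = d),
        X v ^ e

def gen : Fin 4 → Fin 8 → ZMod 2 :=
  ![![0,0,0,0,1,1,1,1], ![0,0,1,1,0,0,1,1], ![0,1,0,1,0,1,0,1], ![1,1,1,1,1,1,1,1]]

def enc : Fin 8 → Fin 3 → ZMod 2 := fun j t => gen t.castSucc j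

lemma H8_eq_span_range : H8code = Submodule.span (ZMod 2) (Set.range gen) := by
  unfold H8code gen
  congr 1
  rw [Matrix.range_cons, Matrix.range_cons, Matrix.range_cons, Matrix.range_cons_empty]
  ext v; simp only [Set.union_singleton, Set.mem_insert_iff, Set.mem_singleton_iff,
    Set.mem_union]; tauto

lemma key1 : ∀ (a : Fin 4 → ZMod 2) (j : Fin 8),
    ∑ i, a i * gen i j = (fun t => a t.castSucc) ⬝ᵥ enc j + a 3 := by decide

lemma key2 : ∀ (b : Fin 3 → ZMod 2) (c0 : ZMod 2) (j : Fin 8),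
    ∑ i, (Fin.snoc b c0 : Fin 4 → ZMod 2) i * gen i j = b ⬝ᵥ enc j + c0 := by decide

lemma mem_H8_iff (v : Fin 8 → ZMod 2) :
    v ∈ H8code ↔ ∃ b : Fin 3 → ZMod 2, ∃ c0 : ZMod 2, ∀ j, v j = b ⬝ᵥ enc j + c0 := by
  rw [H8_eq_span_range, Submodule.mem_span_range_iff_exists_fun]
  constructor
  · rintro ⟨a, rfl⟩
    exact ⟨fun t => a t.castSucc, a 3, fun j => by
      simpa only [Finset.sum_apply, Pi.smul_apply, smul_eq_mul] using key1 a j⟩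
  · rintro ⟨b, c0, hv⟩
    refine ⟨(Fin.snoc b c0 : Fin 4 → ZMod 2), ?_⟩
    ext j
    rw [hv j, ← key2 b c0 j]
    simp only [Finset.sum_apply, Pi.smul_apply, smul_eq_mul]

variable {m : ℕ}

def Psi (m : ℕ) (p : Matrix (Fin m) (Fin 3) (ZMod 2) × V m) : Fin 8 → V m :=
  fun j => p.1 *ᵥ enc j + p.2

lemma codeExt_eq_range : codeExt 2 m 8 H8code = Set.range (Psi m) := by
  ext w
  constructor
  · rintro ⟨rows, hrows, hw⟩
    choose b c0 hb using fun i => (mem_H8_iff (rows i)).1 (hrows i)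
    refine ⟨(fun i => b i, fun i => c0 i), ?_⟩
    funext j
    funext i
    show (fun i => b i) i ⬝ᵥ enc j + c0 i = w j i
    rw [hw j i, hb i j]
  · rintro ⟨⟨B, c⟩, rfl⟩
    exact ⟨fun i j => B i ⬝ᵥ enc j + c i,
      fun i => (mem_H8_iff _).2 ⟨B i, c i, fun j => rfl⟩, fun j i => rfl⟩

lemma enc_zero : enc 0 = 0 := by decide
lemma enc_four : enc 4 = Pi.single 0 1 := by decide
lemma enc_two : enc 2 = Pi.single 1 1 := by decide
lemma enc_one : enc 1 = Pi.single 2 1 := by decide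

lemma Psi_inj : Function.Injective (Psi m) := by
  rintro ⟨B, c⟩ ⟨B', c'⟩ h
  have h0 : c = c' := by
    have := congr_fun h 0
    simpa [Psi, enc_zero] using this
  subst h0
  have hcol : ∀ (j : Fin 8) (t : Fin 3), enc j = Pi.single t 1 → Bᵀ t = B'ᵀ t := by
    intro j t hj
    have := congr_fun h j
    simp only [Psi, hj, Matrix.mulVec_single_one, add_left_inj] at this
    exact this
  have hB : B = B' := by
    have hT : Bᵀ = B'ᵀ := by
      funext t u
      fin_cases t <;> simp only []
      · exact congr_fun (hcol 4 0 enc_four) u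
      · exact congr_fun (hcol 2 1 enc_two) u
      · exact congr_fun (hcol 1 2 enc_one) u
    funext i u
    exact congr_fun (congr_fun hT u) i
  rw [hB]

lemma cwe_eq_sum : cwe m 8 H8code =
    ∑ p : Matrix (Fin m) (Fin 3) (ZMod 2) × V m, ∏ j, X (Psi m p j) := by
  classical
  unfold cwe
  rw [← Finset.sum_filter]
  have : Finset.univ.filter (fun w : Fin 8 → V m => w ∈ codeExt 2 m 8 H8code)
      = Finset.univ.image (Psi m) := by
    ext w
    simp [codeExt_eq_range, Set.mem_range, eq_comm]
  rw [this, Finset.sum_image (fun p _ q _ h => Psi_inj h)]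

lemma enc_bij : Function.Bijective enc := by decide

lemma prod_reindex (B : Matrix (Fin m) (Fin 3) (ZMod 2)) (c : V m) :
    ∏ j : Fin 8, X (Psi m (B, c) j)
      = ∏ u : Fin 3 → ZMod 2, (X (B *ᵥ u + c) : MvPolynomial (V m) ℝ) :=
  Fintype.prod_bijective enc enc_bij _ _ (fun _ => rfl)

lemma finrank_range_le (B : Matrix (Fin m) (Fin 3) (ZMod 2)) :
    Module.finrank (ZMod 2) (LinearMap.range B.mulVecLin) ≤ 3 := by
  have h := LinearMap.finrank_range_add_finrank_ker B.mulVecLin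
  rw [Module.finrank_fin_fun] at h
  omega

lemma card_ker (B : Matrix (Fin m) (Fin 3) (ZMod 2)) :
    Nat.card (LinearMap.ker B.mulVecLin)
      = 2 ^ (3 - Module.finrank (ZMod 2) (LinearMap.range B.mulVecLin)) := by
  classical
  have h := LinearMap.finrank_range_add_finrank_ker B.mulVecLin
  rw [Module.finrank_fin_fun] at h
  rw [Nat.card_eq_fintype_card, Module.card_eq_pow_finrank (K := ZMod 2), ZMod.card]
  congr 1
  omega

open scoped Classical in
lemma prod_collapse (B : Matrix (Fin m) (Fin 3) (ZMod 2)) (c : V m) :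
    (∏ u : Fin 3 → ZMod 2, (X (B *ᵥ u + c) : MvPolynomial (V m) ℝ)) =
    ∏ v ∈ Finset.univ.filter (fun v : V m =>
        (Submodule.Quotient.mk v : V m ⧸ LinearMap.range B.mulVecLin)
          = Submodule.Quotient.mk c),
      X v ^ 2 ^ (3 - Module.finrank (ZMod 2) (LinearMap.range B.mulVecLin)) := by
  classical
  set U := LinearMap.range B.mulVecLin with hU
  rw [← Finset.prod_fiberwise_of_maps_to (g := fun u : Fin 3 → ZMod 2 => B *ᵥ u + c)
    (t := Finset.univ.filter (fun v : V m =>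
        (Submodule.Quotient.mk v : V m ⧸ U) = Submodule.Quotient.mk c))
    (fun u _ => by
      simp only [Finset.mem_filter, Finset.mem_univ, true_and]
      rw [Submodule.Quotient.eq]
      exact ⟨u, by simp⟩)]
  refine Finset.prod_congr rfl (fun v hv => ?_)
  simp only [Finset.mem_filter, Finset.mem_univ, true_and] at hv
  rw [Submodule.Quotient.eq] at hv
  obtain ⟨u₀, hu₀⟩ := hv
  have hfib : ∀ u : Fin 3 → ZMod 2, B *ᵥ u + c = v ↔ u - u₀ ∈ LinearMap.ker B.mulVecLin := by
    intro u
    rw [LinearMap.mem_ker, map_sub]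
    constructor
    · intro h
      show B *ᵥ u - B.mulVecLin u₀ = 0
      rw [hu₀]
      have : B *ᵥ u = v - c := by rw [← h]; abel
      rw [this, sub_self]
    · intro h
      have : B *ᵥ u = B.mulVecLin u₀ := by
        have := sub_eq_zero.mp h
        exact this
      rw [this, hu₀]
      abel
  have hcard : (Finset.univ.filter (fun u : Fin 3 → ZMod 2 => B *ᵥ u + c = v)).card
      = 2 ^ (3 - Module.finrank (ZMod 2) U) := by
    rw [← card_ker B, Nat.card_eq_fintype_card, ← Fintype.card_subtype]
    refine Fintype.card_congr ⟨fun u => ⟨u.1 - u₀, (hfib u.1).1 u.2⟩,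
      fun w => ⟨w.1 + u₀, (hfib _).2 (by simp [w.2])⟩, ?_, ?_⟩
    · rintro ⟨u, hu⟩; simp
    · rintro ⟨w, hw⟩; simp
  calc ∏ u ∈ Finset.univ.filter (fun u : Fin 3 → ZMod 2 => B *ᵥ u + c = v),
        (X (B *ᵥ u + c) : MvPolynomial (V m) ℝ)
      = ∏ u ∈ Finset.univ.filter (fun u : Fin 3 → ZMod 2 => B *ᵥ u + c = v),
        (X v : MvPolynomial (V m) ℝ) := by
        refine Finset.prod_congr rfl (fun u hu => ?_)
        simp only [Finset.mem_filter] at hu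
        rw [hu.2]
    _ = X v ^ 2 ^ (3 - Module.finrank (ZMod 2) U) := by
        rw [Finset.prod_const, hcard]

def Scount (k : ℕ) : ℕ :=
  Nat.card {B : Matrix (Fin k) (Fin 3) (ZMod 2) // Function.Surjective B.mulVec}

lemma Scount_ge4 {k : ℕ} (hk : 4 ≤ k) : Scount k = 0 := by
  rw [Scount]
  have : IsEmpty {B : Matrix (Fin k) (Fin 3) (ZMod 2) // Function.Surjective B.mulVec} := by
    refine ⟨fun B => ?_⟩
    have := Fintype.card_le_of_surjective _ B.2
    simp only [Fintype.card_fun, Fintype.card_fin, ZMod.card] at this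
    have h8 : (2:ℕ) ^ 3 < 2 ^ k := Nat.pow_lt_pow_right (by norm_num) (by omega)
    omega
  simp [Nat.card_of_isEmpty]

lemma toMatrix'_mulVecLin {a b : ℕ} (f : (Fin a → ZMod 2) →ₗ[ZMod 2] (Fin b → ZMod 2)) :
    (LinearMap.toMatrix' f).mulVecLin = f := by
  rw [← Matrix.toLin'_apply']; exact Matrix.toLin'_toMatrix' f

lemma toMatrix'_mulVec {a b : ℕ} (f : (Fin a → ZMod 2) →ₗ[ZMod 2] (Fin b → ZMod 2)) :
    (LinearMap.toMatrix' f).mulVec = ⇑f := by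
  funext x; rw [← Matrix.mulVecLin_apply, toMatrix'_mulVecLin]

lemma N_card_eq (U : Submodule (ZMod 2) (V m)) :
    Nat.card {B : Matrix (Fin m) (Fin 3) (ZMod 2) // LinearMap.range B.mulVecLin = U}
      = Scount (Module.finrank (ZMod 2) U) := by
  classical
  let eU : U ≃ₗ[ZMod 2] (Fin (Module.finrank (ZMod 2) U) → ZMod 2) :=
    (Module.finBasis (ZMod 2) U).equivFun
  refine Nat.card_congr ?_
  refine ⟨fun B => ⟨LinearMap.toMatrix'
      ((eU : U →ₗ[ZMod 2] _) ∘ₗ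
        LinearMap.codRestrict U B.1.mulVecLin
          (fun x => (le_of_eq B.2) (LinearMap.mem_range_self _ x))), ?_⟩,
    fun B' => ⟨LinearMap.toMatrix'
      (U.subtype ∘ₗ (eU.symm : _ →ₗ[ZMod 2] U) ∘ₗ Matrix.toLin' B'.1), ?_⟩,
    ?_, ?_⟩
  · -- surjectivity
    show Function.Surjective (LinearMap.toMatrix' _).mulVec
    rw [toMatrix'_mulVec, LinearMap.coe_comp]
    refine Function.Surjective.comp eU.surjective ?_
    rintro ⟨u, hu⟩
    rw [← B.2] at hu
    obtain ⟨x, hx⟩ := hu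
    exact ⟨x, Subtype.ext hx⟩
  · -- range = U
    rw [toMatrix'_mulVecLin, LinearMap.range_comp, LinearMap.range_eq_top.2, Submodule.map_top,
      Submodule.range_subtype]
    rw [LinearMap.coe_comp]
    refine Function.Surjective.comp eU.symm.surjective ?_
    intro y
    obtain ⟨x, hx⟩ := B'.2 y
    exact ⟨x, hx⟩
  · -- left inverse
    rintro ⟨B, hB⟩
    refine Subtype.ext ?_
    refine Matrix.toLin'.injective ?_
    rw [Matrix.toLin'_toMatrix']
    apply LinearMap.ext
    intro x
    simp only [LinearMap.comp_apply, LinearEquiv.coe_coe, Submodule.coe_subtype,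
      Matrix.toLin'_apply', toMatrix'_mulVecLin, LinearEquiv.symm_apply_apply,
      LinearMap.codRestrict_apply]
  · -- right inverse
    rintro ⟨B', hB'⟩
    refine Subtype.ext ?_
    refine Matrix.toLin'.injective ?_
    rw [Matrix.toLin'_toMatrix']
    apply LinearMap.ext
    intro x
    simp only [LinearMap.comp_apply, LinearEquiv.coe_coe]
    rw [show ∀ (a : U) (b : Fin (Module.finrank (ZMod 2) U) → ZMod 2),
        eU a = b ↔ a = eU.symm b from fun a b => ⟨fun h => by rw [← h]; simp,
          fun h => by rw [h]; simp⟩]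
    apply Subtype.ext
    simp only [LinearMap.codRestrict_apply, toMatrix'_mulVecLin, LinearMap.comp_apply,
      LinearEquiv.coe_coe, Submodule.coe_subtype]

lemma Scount_zero : Scount 0 = 1 := by
  rw [Scount, Nat.card_eq_fintype_card]; decide

lemma Scount_one : Scount 1 = 7 := by
  rw [Scount, Nat.card_eq_fintype_card]; decide

set_option maxHeartbeats 1000000 in
lemma Scount_two : Scount 2 = 42 := by
  rw [Scount, Nat.card_eq_fintype_card]; decide

set_option maxHeartbeats 4000000 in
set_option maxRecDepth 10000 in
lemma Scount_three : Scount 3 = 168 := by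
  rw [Scount, Nat.card_eq_fintype_card]; decide

open scoped Classical

instance : Finite (Submodule (ZMod 2) (V m)) :=
  Finite.of_injective (fun U => (U : Set (V m))) SetLike.coe_injective

noncomputable instance : Fintype (Submodule (ZMod 2) (V m)) := Fintype.ofFinite _

def cosetProd (U : Submodule (ZMod 2) (V m)) (d : V m ⧸ U) (e : ℕ) : MvPolynomial (V m) ℝ :=
  ∏ v ∈ Finset.univ.filter (fun v : V m => (Submodule.Quotient.mk v : V m ⧸ U) = d), X v ^ e

lemma cosetTerm_eq (k e : ℕ) : (cosetTerm m k e : MvPolynomial (V m) ℝ) =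
    ∑ U : Submodule (ZMod 2) (V m),
      if Module.finrank (ZMod 2) U = k then ∑ d : V m ⧸ U, cosetProd U d e else 0 := by
  rw [cosetTerm, finsum_eq_sum_of_fintype]
  refine Finset.sum_congr rfl fun U _ => ?_
  rw [finsum_eq_if]
  split_ifs
  · rw [finsum_eq_sum_of_fintype]; rfl
  · rfl

lemma card_coset (U : Submodule (ZMod 2) (V m)) (d : V m ⧸ U) :
    (Finset.univ.filter
      (fun c : V m => (Submodule.Quotient.mk c : V m ⧸ U) = d)).card = Nat.card U := by
  obtain ⟨c₀, rfl⟩ := Submodule.Quotient.mk_surjective U d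
  rw [Nat.card_eq_fintype_card, ← Fintype.card_subtype]
  refine Fintype.card_congr ⟨fun c => ⟨c.1 - c₀, (Submodule.Quotient.eq U).mp c.2⟩,
    fun u => ⟨u.1 + c₀, (Submodule.Quotient.eq U).mpr (by simpa using u.2)⟩, ?_, ?_⟩
  · rintro ⟨x, hx⟩; simp
  · rintro ⟨x, hx⟩; simp

lemma sum_over_c (U : Submodule (ZMod 2) (V m)) (e : ℕ) :
    ∑ c : V m, cosetProd U (Submodule.Quotient.mk c) e
      = (Nat.card U) • ∑ d : V m ⧸ U, cosetProd U d e := by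
  rw [← Finset.sum_fiberwise_of_maps_to
    (g := fun c : V m => (Submodule.Quotient.mk c : V m ⧸ U)) (t := Finset.univ)
    (fun c _ => Finset.mem_univ _) (fun c => cosetProd U (Submodule.Quotient.mk c) e),
    Finset.smul_sum]
  refine Finset.sum_congr rfl fun d _ => ?_
  calc ∑ c ∈ Finset.univ.filter
        (fun c : V m => (Submodule.Quotient.mk c : V m ⧸ U) = d),
        cosetProd U (Submodule.Quotient.mk c) e
      = ∑ _c ∈ Finset.univ.filter
        (fun c : V m => (Submodule.Quotient.mk c : V m ⧸ U) = d), cosetProd U d e := by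
        refine Finset.sum_congr rfl fun c hc => ?_
        rw [(Finset.mem_filter.mp hc).2]
    _ = Nat.card U • cosetProd U d e := by rw [Finset.sum_const, card_coset]

lemma card_submodule (U : Submodule (ZMod 2) (V m)) :
    Nat.card U = 2 ^ Module.finrank (ZMod 2) U := by
  rw [Nat.card_eq_fintype_card, Module.card_eq_pow_finrank (K := ZMod 2), ZMod.card]

lemma step_B : cwe m 8 H8code = ∑ U : Submodule (ZMod 2) (V m),
    (Scount (Module.finrank (ZMod 2) U) * 2 ^ Module.finrank (ZMod 2) U) •
      ∑ d : V m ⧸ U, cosetProd U d (2 ^ (3 - Module.finrank (ZMod 2) U)) := by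
  rw [cwe_eq_sum, Fintype.sum_prod_type]
  have hB : ∀ B : Matrix (Fin m) (Fin 3) (ZMod 2),
      ∑ c : V m, ∏ j, (X (Psi m (B, c) j) : MvPolynomial (V m) ℝ)
        = (2 ^ Module.finrank (ZMod 2) (LinearMap.range B.mulVecLin)) •
            ∑ d : V m ⧸ LinearMap.range B.mulVecLin,
              cosetProd (LinearMap.range B.mulVecLin) d
                (2 ^ (3 - Module.finrank (ZMod 2) (LinearMap.range B.mulVecLin))) := by
    intro B
    rw [← card_submodule, ← sum_over_c]
    refine Finset.sum_congr rfl fun c _ => ?_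
    rw [prod_reindex B c, prod_collapse B c]
    rfl
  calc ∑ B : Matrix (Fin m) (Fin 3) (ZMod 2), ∑ c : V m,
        ∏ j, (X (Psi m (B, c) j) : MvPolynomial (V m) ℝ)
      = ∑ B : Matrix (Fin m) (Fin 3) (ZMod 2),
        (2 ^ Module.finrank (ZMod 2) (LinearMap.range B.mulVecLin)) •
            ∑ d : V m ⧸ LinearMap.range B.mulVecLin,
              cosetProd (LinearMap.range B.mulVecLin) d
                (2 ^ (3 - Module.finrank (ZMod 2) (LinearMap.range B.mulVecLin))) :=
        Finset.sum_congr rfl fun B _ => hB B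
    _ = ∑ U : Submodule (ZMod 2) (V m), ∑ B ∈ Finset.univ.filter
          (fun B : Matrix (Fin m) (Fin 3) (ZMod 2) => LinearMap.range B.mulVecLin = U),
          (2 ^ Module.finrank (ZMod 2) (LinearMap.range B.mulVecLin)) •
            ∑ d : V m ⧸ LinearMap.range B.mulVecLin,
              cosetProd (LinearMap.range B.mulVecLin) d
                (2 ^ (3 - Module.finrank (ZMod 2) (LinearMap.range B.mulVecLin))) :=
        (Finset.sum_fiberwise_of_maps_to
          (g := fun B : Matrix (Fin m) (Fin 3) (ZMod 2) => LinearMap.range B.mulVecLin)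
          (fun B _ => Finset.mem_univ _) _).symm
    _ = ∑ U : Submodule (ZMod 2) (V m), ∑ B ∈ Finset.univ.filter
          (fun B : Matrix (Fin m) (Fin 3) (ZMod 2) => LinearMap.range B.mulVecLin = U),
          (2 ^ Module.finrank (ZMod 2) U) •
            ∑ d : V m ⧸ U, cosetProd U d (2 ^ (3 - Module.finrank (ZMod 2) U)) := by
        refine Finset.sum_congr rfl fun U _ => Finset.sum_congr rfl fun B hB => ?_
        rw [(Finset.mem_filter.mp hB).2]
    _ = ∑ U : Submodule (ZMod 2) (V m),
        (Scount (Module.finrank (ZMod 2) U) * 2 ^ Module.finrank (ZMod 2) U) •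
          ∑ d : V m ⧸ U, cosetProd U d (2 ^ (3 - Module.finrank (ZMod 2) U)) := by
        refine Finset.sum_congr rfl fun U _ => ?_
        rw [Finset.sum_const, ← N_card_eq U, Nat.card_eq_fintype_card, Fintype.card_subtype,
          smul_smul]

lemma mk_bot_bijective :
    Function.Bijective (fun v : V m => (Submodule.Quotient.mk v : V m ⧸ (⊥ : Submodule (ZMod 2) (V m)))) := by
  constructor
  · intro a b h
    rw [Submodule.Quotient.eq] at h
    simpa [sub_eq_zero] using h
  · exact Submodule.Quotient.mk_surjective _

lemma sum_bot : ∑ U : Submodule (ZMod 2) (V m),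
    (if Module.finrank (ZMod 2) U = 0 then ∑ d : V m ⧸ U, cosetProd U d 8 else 0)
      = ∑ v : V m, (X v : MvPolynomial (V m) ℝ) ^ 8 := by
  have h2 : ∀ v : V m, cosetProd (⊥ : Submodule (ZMod 2) (V m)) (Submodule.Quotient.mk v) 8
      = X v ^ 8 := by
    intro v
    have : (Finset.univ.filter (fun u : V m =>
        (Submodule.Quotient.mk u : V m ⧸ (⊥ : Submodule (ZMod 2) (V m)))
          = Submodule.Quotient.mk v)) = {v} := by
      ext u
      simp [Submodule.Quotient.eq, sub_eq_zero]
    rw [cosetProd, this, Finset.prod_singleton]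
  calc ∑ U : Submodule (ZMod 2) (V m),
        (if Module.finrank (ZMod 2) U = 0 then ∑ d : V m ⧸ U, cosetProd U d 8 else 0)
      = ∑ U : Submodule (ZMod 2) (V m),
        (if U = ⊥ then ∑ d : V m ⧸ U, cosetProd U d 8 else 0) := by
        refine Finset.sum_congr rfl fun U _ => ?_
        rw [if_congr Submodule.finrank_eq_zero rfl rfl]
    _ = ∑ d : V m ⧸ (⊥ : Submodule (ZMod 2) (V m)), cosetProd ⊥ d 8 := by
        rw [Finset.sum_ite_eq' Finset.univ (⊥ : Submodule (ZMod 2) (V m))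
          (fun U => ∑ d : V m ⧸ U, cosetProd U d 8), if_pos (Finset.mem_univ _)]
    _ = ∑ v : V m, (X v : MvPolynomial (V m) ℝ) ^ 8 :=
        (Fintype.sum_bijective _ mk_bot_bijective _ _ (fun v => (h2 v).symm)).symm


/-- the explicit formula for `h_m = cwe(H₈(m))`. -/
theorem cwe_hamming_formula (m : ℕ) (hm : 0 < m) :
    cwe m 8 H8code =
      (∑ v : V m, X v ^ 8)
        + (14 : ℝ) • cosetTerm m 1 4
        + (168 : ℝ) • cosetTerm m 2 2
        + (1344 : ℝ) • cosetTerm m 3 1 := by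
  rw [step_B, cosetTerm_eq 1 4, cosetTerm_eq 2 2, cosetTerm_eq 3 1, ← sum_bot,
    Finset.smul_sum, Finset.smul_sum, Finset.smul_sum,
    ← Finset.sum_add_distrib, ← Finset.sum_add_distrib, ← Finset.sum_add_distrib]
  refine Finset.sum_congr rfl fun U _ => ?_
  have hns : ∀ (n : ℕ) (p : MvPolynomial (V m) ℝ), n • p = (n : ℝ) • p :=
    fun n p => (Nat.cast_smul_eq_nsmul ℝ n p).symm
  rcases hU : Module.finrank (ZMod 2) U with _ | _ | _ | _ | n
  · rw [Scount_zero]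
    norm_num
  · rw [Scount_one]
    rw [hns]
    norm_num
  · rw [Scount_two]
    rw [hns]
    norm_num
  · rw [Scount_three]
    rw [hns]
    norm_num
  · rw [Scount_ge4 (by omega)]
    norm_num
    rw [if_neg (by omega), if_neg (by omega)]
    norm_num

end
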